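/- Let n be an odd prime and r₁, s₁, r₂, s₂ nonzero elements of ZMod n with r₁s₂ ≠ r₂s₁. Then every entry of the matrix X(r₁,s₁)* X(r₂,s₂) has absolute value exactly 1/√n. -/

import Mathlib

open Matrix

/-- `ω n = e^{2πi/n}`. -/
noncomputable def omg (n : ℕ) : ℂ := Complex.exp (2 * Real.pi * Complex.I / n)

/-- The cyclic shift matrix: `S_{i,j} = 1` iff `i + 1 = j` in `ZMod n`. -/
noncomputable def Smat (n : ℕ) : Matrix (ZMod n) (ZMod n) ℂ :=
  Matrix.of fun i j => if i + 1 = j then 1 else 0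

/-- The diagonal matrix `R` with `R_{j,j} = ω^j`. -/
noncomputable def Rmat (n : ℕ) : Matrix (ZMod n) (ZMod n) ℂ :=
  Matrix.diagonal fun j => omg n ^ (j.val)

/-- The permutation matrix `Π_s`, with `(Π_s)_{s i, i} = 1`. -/
noncomputable def Pmat (n : ℕ) (s : ZMod n) : Matrix (ZMod n) (ZMod n) ℂ :=
  Matrix.of fun i j => if i = s * j then 1 else 0

/-- The unitary Fourier matrix `F_{k,l} = ω^{kl}/√n`. -/
noncomputable def Fmat (n : ℕ) : Matrix (ZMod n) (ZMod n) ℂ :=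
  Matrix.of fun k l => omg n ^ (k.val * l.val) / Real.sqrt n

/-- The unitary matrix `X(r,s) = Π_s B F` with `B_{k,k} = ω^{-rs·k(k-1)/2}`. -/
noncomputable def Xmat (n : ℕ) [NeZero n] (r s : ZMod n) : Matrix (ZMod n) (ZMod n) ℂ :=
  Pmat n s *
    (Matrix.diagonal fun k : ZMod n =>
      omg n ^ (-((((r * s).val : ℤ)) * (k.val * (k.val - 1) / 2 : ℕ)))) *
    Fmat n

noncomputable def ee (n : ℕ) [NeZero n] (x : ZMod n) : ℂ := omg n ^ x.val

section basic
variable (n : ℕ) [NeZero n]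

lemma omg_prim : IsPrimitiveRoot (omg n) n :=
  Complex.isPrimitiveRoot_exp n (NeZero.ne n)

lemma omg_pow_n : omg n ^ n = 1 := (omg_prim n).pow_eq_one

lemma ee_natCast (N : ℕ) : omg n ^ N = ee n (N : ZMod n) := by
  unfold ee
  rw [ZMod.val_natCast]
  conv_lhs => rw [← Nat.div_add_mod N n]
  rw [pow_add, pow_mul, omg_pow_n, one_pow, one_mul]

lemma ee_intCast (z : ℤ) : omg n ^ z = ee n (z : ZMod n) := by
  have h0 : (0:ℤ) < n := by exact_mod_cast Nat.pos_of_ne_zero (NeZero.ne n)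
  have hnn : 0 ≤ z % n := Int.emod_nonneg z (by exact_mod_cast h0.ne')
  have hne : omg n ≠ 0 := Complex.exp_ne_zero _
  have hstep : omg n ^ z = omg n ^ ((z % n).toNat) := by
    conv_lhs => rw [← Int.mul_ediv_add_emod z n]
    rw [zpow_add₀ hne, _root_.zpow_mul, zpow_natCast, omg_pow_n, _root_.one_zpow, one_mul,
      ← _root_.zpow_natCast, Int.toNat_of_nonneg hnn]
  rw [hstep, ee_natCast]
  congr 1
  have h2 : ((z % n : ℤ) : ZMod n) = ((z : ℤ) : ZMod n) :=
    (ZMod.intCast_eq_intCast_iff _ _ _).mpr (Int.emod_emod_of_dvd z dvd_rfl)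
  rw [← h2, ← Int.cast_natCast, Int.toNat_of_nonneg hnn]

lemma ee_add (x y : ZMod n) : ee n (x + y) = ee n x * ee n y := by
  have : ee n x * ee n y = omg n ^ (x.val + y.val) := by rw [pow_add]; rfl
  rw [this, ee_natCast]
  congr 1
  push_cast
  simp [ZMod.natCast_val, ZMod.cast_id]

lemma ee_zero : ee n 0 = 1 := by simp [ee, ZMod.val_zero]

lemma ee_ne_zero (x : ZMod n) : ee n x ≠ 0 := pow_ne_zero _ (Complex.exp_ne_zero _)

lemma ee_neg (x : ZMod n) : ee n (-x) = (ee n x)⁻¹ := by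
  apply eq_inv_of_mul_eq_one_left
  rw [← ee_add, neg_add_cancel, ee_zero]

lemma ee_conj (x : ZMod n) : (starRingEnd ℂ) (ee n x) = ee n (-x) := by
  have habs : ‖ee n x‖ = 1 := by
    unfold ee omg
    rw [norm_pow, Complex.norm_exp]
    have : (2 * (Real.pi:ℂ) * Complex.I / n).re = 0 := by
      simp [Complex.div_re]
    rw [this, Real.exp_zero, one_pow]
  have h1 : ee n x * (starRingEnd ℂ) (ee n x) = 1 := by
    rw [Complex.mul_conj, ← Complex.sq_norm, habs]
    norm_num
  rw [ee_neg]
  exact eq_inv_of_mul_eq_one_left (by rw [mul_comm]; exact h1)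

lemma ee_eq_one_iff (x : ZMod n) : ee n x = 1 ↔ x = 0 := by
  constructor
  · intro hx
    have := ((omg_prim n).pow_eq_one_iff_dvd x.val).mp hx
    have hlt := ZMod.val_lt x
    have hv : x.val = 0 := Nat.eq_zero_of_dvd_of_lt this hlt
    exact (ZMod.val_eq_zero x).mp hv
  · intro hx; rw [hx, ee_zero]

lemma ee_sum_eq_zero {c : ZMod n} (hc : c ≠ 0) : ∑ k : ZMod n, ee n (c * k) = 0 := by
  have key : ee n c * ∑ k : ZMod n, ee n (c * k) = ∑ k : ZMod n, ee n (c * k) := by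
    rw [Finset.mul_sum]
    rw [← Equiv.sum_comp (Equiv.addRight 1) (fun k => ee n (c * k))]
    apply Finset.sum_congr rfl
    intro k _
    rw [← ee_add]
    congr 1
    simp [Equiv.coe_addRight]
    ring
  have hne : ee n c ≠ 1 := fun hh => hc ((ee_eq_one_iff n c).mp hh)
  have hz : (ee n c - 1) * ∑ k : ZMod n, ee n (c * k) = 0 := by
    rw [sub_mul, one_mul, key, sub_self]
  rcases mul_eq_zero.mp hz with h1 | h2
  · exact absurd (sub_eq_zero.mp h1) hne
  · exact h2

end basic

section gauss
variable (n : ℕ) [NeZero n] [Fact (Nat.Prime n)]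

lemma two_ne_zero'' (hodd : Odd n) : (2 : ZMod n) ≠ 0 := by
  intro hc
  have h2 : ((2 : ℕ) : ZMod n) = 0 := by exact_mod_cast hc
  have hdvd : n ∣ 2 := (ZMod.natCast_eq_zero_iff 2 n).mp h2
  have hp : Nat.Prime n := Fact.out
  have : n = 2 := (Nat.prime_dvd_prime_iff_eq hp Nat.prime_two).mp hdvd
  rw [this] at hodd
  exact (Nat.not_odd_iff_even.mpr (by norm_num)) hodd

lemma gauss_abs (hodd : Odd n) (a b : ZMod n) (ha : a ≠ 0) :
    ‖∑ j : ZMod n, ee n (a * j ^ 2 + b * j)‖ = Real.sqrt n := by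
  set S := ∑ j : ZMod n, ee n (a * j ^ 2 + b * j) with hS
  have key : S * (starRingEnd ℂ) S = n := by
    have h1 : S * (starRingEnd ℂ) S
        = ∑ k : ZMod n, ∑ t : ZMod n, ee n (a * t ^ 2 + b * t + 2 * a * t * k) := by
      rw [hS, map_sum, Finset.mul_sum]
      apply Finset.sum_congr rfl
      intro k _
      rw [Finset.sum_mul]
      rw [← Equiv.sum_comp (Equiv.addRight k)
        (fun j => ee n (a * j ^ 2 + b * j) * (starRingEnd ℂ) (ee n (a * k ^ 2 + b * k)))]
      apply Finset.sum_congr rfl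
      intro t _
      simp only [Equiv.coe_addRight]
      rw [ee_conj, ← ee_add]
      congr 1
      ring
    rw [h1, Finset.sum_comm]
    have h3 : ∀ t : ZMod n, ∑ k : ZMod n, ee n (a * t ^ 2 + b * t + 2 * a * t * k)
        = ee n (a * t ^ 2 + b * t) * ∑ k : ZMod n, ee n ((2 * a * t) * k) := by
      intro t
      rw [Finset.mul_sum]
      apply Finset.sum_congr rfl
      intro k _
      rw [← ee_add]
    rw [Finset.sum_congr rfl fun t _ => h3 t]
    rw [Finset.sum_eq_single 0]
    · simp [ee_zero, Finset.card_univ]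
    · intro t _ ht
      have h2t : 2 * a * t ≠ 0 := mul_ne_zero (mul_ne_zero (two_ne_zero'' n hodd) ha) ht
      rw [ee_sum_eq_zero n h2t, mul_zero]
    · intro habs
      exact absurd (Finset.mem_univ 0) habs
  have habs : ‖S‖ ^ 2 = n := by
    rw [Complex.sq_norm]
    have h2 : (Complex.normSq S : ℂ) = n := by rw [← Complex.mul_conj]; exact key
    exact_mod_cast h2
  rw [← habs, Real.sqrt_sq (norm_nonneg S)]

end gauss

lemma half_cast (n : ℕ) [NeZero n] [Fact (Nat.Prime n)] (hodd : Odd n) (j : ZMod n) :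
    ((j.val * (j.val - 1) / 2 : ℕ) : ZMod n) = (2 : ZMod n)⁻¹ * (j * (j - 1)) := by
  have h2 : (2 : ZMod n) ≠ 0 := two_ne_zero'' n hodd
  have heven : 2 ∣ j.val * (j.val - 1) := by
    rcases Nat.even_or_odd j.val with h | h
    · exact Dvd.dvd.mul_right h.two_dvd _
    · exact Dvd.dvd.mul_left (Nat.Odd.sub_odd h odd_one).two_dvd _
  have hmm : (2 : ZMod n) * ((j.val * (j.val - 1) / 2 : ℕ) : ZMod n) = j * (j - 1) := by
    have hc : ((2 * (j.val * (j.val - 1) / 2) : ℕ) : ZMod n)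
        = (2 : ZMod n) * ((j.val * (j.val - 1) / 2 : ℕ) : ZMod n) := by push_cast; ring
    rw [← hc, Nat.mul_div_cancel' heven]
    rcases Nat.eq_zero_or_pos j.val with h0 | h1
    · have hj : j = 0 := (ZMod.val_eq_zero j).mp h0
      simp [h0, hj]
    · push_cast [Nat.cast_sub h1, ZMod.natCast_val, ZMod.cast_id]
      ring
  rw [← hmm, inv_mul_cancel_left₀ h2]

lemma Xmat_apply (n : ℕ) [NeZero n] [Fact (Nat.Prime n)] (hodd : Odd n) (r s : ZMod n)
    (hs : s ≠ 0) (k c : ZMod n) :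
    Xmat n r s k c
      = ee n (-(r * s) * ((2 : ZMod n)⁻¹ * ((s⁻¹ * k) * (s⁻¹ * k - 1))) + (s⁻¹ * k) * c)
        / Real.sqrt n := by
  have hDF : ∀ j : ZMod n,
      ((Matrix.diagonal fun m : ZMod n =>
        omg n ^ (-((((r * s).val : ℤ)) * (m.val * (m.val - 1) / 2 : ℕ)))) * Fmat n) j c
      = ee n (-(r * s) * ((2 : ZMod n)⁻¹ * (j * (j - 1))) + j * c) / Real.sqrt n := by
    intro j
    have e1 : (((-((((r * s).val : ℤ)) * ((j.val * (j.val - 1) / 2 : ℕ) : ℤ))) : ℤ) : ZMod n)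
        = -(r * s) * ((2 : ZMod n)⁻¹ * (j * (j - 1))) := by
      rw [Int.cast_neg, Int.cast_mul, Int.cast_natCast, Int.cast_natCast,
        half_cast n hodd j, ZMod.natCast_val, ZMod.cast_id]
      ring
    have e2 : ((j.val * c.val : ℕ) : ZMod n) = j * c := by
      push_cast [ZMod.natCast_val, ZMod.cast_id]
      ring
    simp only [Matrix.diagonal_mul, Fmat, Matrix.of_apply]
    rw [ee_intCast, ee_natCast, e1, e2, ← mul_div_assoc, ← ee_add]
  rw [Xmat, Matrix.mul_assoc, Matrix.mul_apply]
  simp only [Pmat, Matrix.of_apply, ite_mul, one_mul, zero_mul]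
  have hcond : ∀ i : ZMod n, (k = s * i) = (i = s⁻¹ * k) := by
    intro i
    apply propext
    rw [eq_inv_mul_iff_mul_eq₀ hs, eq_comm]
  simp_rw [hcond]
  rw [Finset.sum_ite_eq' Finset.univ (s⁻¹ * k)]
  simp only [Finset.mem_univ, if_true]
  exact hDF (s⁻¹ * k)

theorem stmt11 (n : ℕ) [NeZero n] [Fact (Nat.Prime n)] (hodd : Odd n)
    (r₁ s₁ r₂ s₂ : ZMod n) (hr₁ : r₁ ≠ 0) (hs₁ : s₁ ≠ 0) (hr₂ : r₂ ≠ 0)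
    (hs₂ : s₂ ≠ 0) (h : r₁ * s₂ ≠ r₂ * s₁) :
    ∀ c d, ‖((Xmat n r₁ s₁)ᴴ * Xmat n r₂ s₂) c d‖ = 1 / Real.sqrt n := by
  intro c d
  have hn0 : (0:ℝ) < n := by exact_mod_cast Nat.pos_of_ne_zero (NeZero.ne n)
  have hsqrt : Real.sqrt n ≠ 0 := ne_of_gt (Real.sqrt_pos.mpr hn0)
  have h2 : (2 : ZMod n) ≠ 0 := two_ne_zero'' n hodd
  obtain ⟨u, hu⟩ : ∃ x : ZMod n, x = s₂⁻¹ * s₁ := ⟨_, rfl⟩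
  obtain ⟨A, hA⟩ : ∃ x : ZMod n, x = (2 : ZMod n)⁻¹ * (r₁ * s₁ - r₂ * s₂ * u ^ 2) := ⟨_, rfl⟩
  obtain ⟨B, hB⟩ : ∃ x : ZMod n,
    x = -((2 : ZMod n)⁻¹ * (r₁ * s₁)) - c + (2 : ZMod n)⁻¹ * (r₂ * s₂) * u + u * d := ⟨_, rfl⟩
  have entry : ((Xmat n r₁ s₁)ᴴ * Xmat n r₂ s₂) c d
      = (∑ j : ZMod n, ee n (A * j ^ 2 + B * j)) / (n : ℂ) := by
    rw [Matrix.mul_apply]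
    have hterm : ∀ k : ZMod n, (Xmat n r₁ s₁)ᴴ c k * Xmat n r₂ s₂ k d
        = ee n (-(-(r₁ * s₁) * ((2 : ZMod n)⁻¹ * ((s₁⁻¹ * k) * (s₁⁻¹ * k - 1))) + (s₁⁻¹ * k) * c)
            + (-(r₂ * s₂) * ((2 : ZMod n)⁻¹ * ((s₂⁻¹ * k) * (s₂⁻¹ * k - 1))) + (s₂⁻¹ * k) * d)) / (n:ℂ) := by
      intro k
      rw [Matrix.conjTranspose_apply, Xmat_apply n hodd r₁ s₁ hs₁ k c,
        Xmat_apply n hodd r₂ s₂ hs₂ k d, Complex.star_def, map_div₀, ee_conj, Complex.conj_ofReal]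
      rw [div_mul_div_comm, ← ee_add]
      congr 1
      rw [← Complex.ofReal_mul, Real.mul_self_sqrt hn0.le]
      norm_cast
    rw [Finset.sum_congr rfl fun k _ => hterm k, ← Finset.sum_div]
    congr 1
    have hbij : Function.Bijective (fun j : ZMod n => s₁ * j) :=
      (Finite.injective_iff_bijective).mp fun a b hab => mul_left_cancel₀ hs₁ hab
    refine (Fintype.sum_bijective (fun j : ZMod n => s₁ * j) hbij _ _ ?_).symm
    intro j
    have e1 : s₁⁻¹ * (s₁ * j) = j := inv_mul_cancel_left₀ hs₁ j
    have e2 : s₂⁻¹ * (s₁ * j) = u * j := by rw [hu]; ring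
    simp only [e1, e2]
    congr 1
    rw [hA, hB, hu]
    ring
  have hfac : r₁ * s₁ - r₂ * s₂ * u ^ 2 ≠ 0 := by
    intro heq
    apply h
    have hkey : s₂ * (r₁ * s₁ - r₂ * s₂ * u ^ 2) = s₁ * (r₁ * s₂ - r₂ * s₁) := by
      rw [hu]
      field_simp
    rw [heq, mul_zero] at hkey
    have h0 := (mul_eq_zero.mp hkey.symm).resolve_left hs₁
    exact sub_eq_zero.mp h0
  have hAne : A ≠ 0 := by rw [hA]; exact mul_ne_zero (inv_ne_zero h2) hfac
  rw [entry, norm_div, Complex.norm_natCast, gauss_abs n hodd A B hAne]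
  rw [eq_div_iff hsqrt, div_mul_eq_mul_div, Real.mul_self_sqrt hn0.le]
  exact div_self (ne_of_gt hn0)
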